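/- arXiv:2602.02324 — 2 statements merged into one kernel-verified Lean document; each statement's English description precedes it below -/
import Mathlib

section
/- For a generalized Hénon map h(x,y)= (y, P(y) - δx) with deg P ≥ 2, there exists R > 0 such that every point (x,y) with |y| > R and |y| ≥ |x| satisfies ‖hⁿ(x,y)‖ → ∞ as n → ∞. -/
open Filter

/-- For a generalized Hénon map with `deg P ≥ 2`, there is `R > 0` such that every
point in `V⁻ = {|y| > R, |y| ≥ |x|}` escapes to infinity under forward iteration. -/
theorem henon_Vminus_escapes
    (P : Polynomial ℂ) (hP : 2 ≤ P.natDegree) (δ : ℂ) (hδ : δ ≠ 0)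
    (h : ℂ × ℂ → ℂ × ℂ) (hh : ∀ x y : ℂ, h (x, y) = (y, P.eval y - δ * x)) :
    ∃ R > (0 : ℝ), ∀ x y : ℂ, R < ‖y‖ → ‖x‖ ≤ ‖y‖ →
      Tendsto (fun n : ℕ =>
          max ‖(h^[n] (x, y)).1‖ ‖(h^[n] (x, y)).2‖)
        atTop atTop := by
  set Q := P.divX with hQ
  set c : ℝ := 2 + ‖δ‖ with hc
  have hQdeg : 0 < Q.degree := by
    rw [Polynomial.natDegree_pos_iff_degree_pos.symm, hQ,
      Polynomial.natDegree_divX_eq_natDegree_tsub_one]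
    omega
  have htend : Tendsto (fun y : ℂ => ‖Q.eval y‖) (Filter.comap norm atTop) atTop :=
    Q.tendsto_norm_atTop hQdeg tendsto_comap
  have hev : ∀ᶠ y : ℂ in Filter.comap norm atTop, c + 1 ≤ ‖Q.eval y‖ :=
    htend.eventually (eventually_ge_atTop (c + 1))
  rw [eventually_comap] at hev
  obtain ⟨R0, hR0⟩ := eventually_atTop.mp hev
  set a0 : ℂ := P.coeff 0 with ha0
  refine ⟨max R0 (max (‖a0‖) 1), lt_max_of_lt_right (lt_max_of_lt_right one_pos), ?_⟩
  set R : ℝ := max R0 (max (‖a0‖) 1) with hR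
  have hR1 : (1 : ℝ) ≤ R := le_trans (le_max_right _ _) (le_max_right _ _)
  have hRa : ‖a0‖ ≤ R := le_trans (le_max_left _ _) (le_max_right _ _)
  -- key estimate
  have key : ∀ x y : ℂ, R < ‖y‖ → ‖x‖ ≤ ‖y‖ →
      2 * ‖y‖ ≤ ‖P.eval y - δ * x‖ := by
    intro x y hy hxy
    have hQy : c + 1 ≤ ‖Q.eval y‖ :=
      hR0 ‖y‖ (le_of_lt (lt_of_le_of_lt (le_max_left _ _) hy)) y rfl
    have hPy : P.eval y = y * Q.eval y + a0 := by
      have := congrArg (Polynomial.eval y) (Polynomial.X_mul_divX_add P)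
      simp only [Polynomial.eval_add, Polynomial.eval_mul, Polynomial.eval_X,
        Polynomial.eval_C] at this
      exact this.symm
    have hy0 : (0 : ℝ) < ‖y‖ := lt_of_le_of_lt (by linarith) hy
    have h1 : (c + 1) * ‖y‖ - ‖a0‖ ≤ ‖y * Q.eval y + a0‖ := by
      have hge : ‖y * Q.eval y‖ - ‖a0‖ ≤
          ‖y * Q.eval y + a0‖ := by
        have h4 := norm_sub_le (y * Q.eval y + a0) a0
        simp only [add_sub_cancel_right] at h4
        linarith
      have : (c + 1) * ‖y‖ ≤ ‖y * Q.eval y‖ := by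
        rw [norm_mul]
        nlinarith
      linarith
    have h2 : ‖P.eval y‖ - ‖δ‖ * ‖y‖ ≤
        ‖P.eval y - δ * x‖ := by
      have := norm_sub_norm_le (P.eval y) (δ * x)
      have hδx : ‖δ * x‖ ≤ ‖δ‖ * ‖y‖ := by
        rw [norm_mul]
        nlinarith [norm_nonneg δ]
      linarith
    have ha : ‖a0‖ < ‖y‖ := lt_of_le_of_lt hRa hy
    rw [hPy] at h2 ⊢
    simp only [hc] at h1
    linarith
  intro x y hy hxy
  -- invariant by induction
  have inv : ∀ n : ℕ, R < ‖(h^[n] (x, y)).2‖ ∧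
      ‖(h^[n] (x, y)).1‖ ≤ ‖(h^[n] (x, y)).2‖ ∧
      2 ^ n * ‖y‖ ≤ ‖(h^[n] (x, y)).2‖ := by
    intro n
    induction n with
    | zero =>
      simp only [Function.iterate_zero, id_eq, pow_zero, one_mul]
      exact ⟨hy, hxy, le_refl _⟩
    | succ n ih =>
      obtain ⟨ih1, ih2, ih3⟩ := ih
      set p := h^[n] (x, y) with hp
      have hstep : h^[n + 1] (x, y) = (p.2, P.eval p.2 - δ * p.1) := by
        rw [Function.iterate_succ_apply', ← hp, ← hh p.1 p.2]
      rw [hstep]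
      have hk := key p.1 p.2 ih1 ih2
      have hppos : (0 : ℝ) < ‖p.2‖ := lt_of_le_of_lt (by linarith) ih1
      refine ⟨by dsimp only; linarith, by dsimp only; linarith, ?_⟩
      dsimp only
      have h2n : (2 : ℝ) ^ (n + 1) * ‖y‖ = 2 * (2 ^ n * ‖y‖) := by ring
      rw [h2n]
      linarith
  have hy0 : 0 < ‖y‖ := lt_of_le_of_lt (by linarith) hy
  have hlow : Tendsto (fun n : ℕ => (2 : ℝ) ^ n * ‖y‖) atTop atTop :=
    (tendsto_pow_atTop_atTop_of_one_lt (by norm_num : (1:ℝ) < 2)).atTop_mul_const hy0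
  refine tendsto_atTop_mono (fun n => ?_) hlow
  exact le_trans (inv n).2.2 (le_max_right _ _)
end

section
/- Let G be a countable group acting by homeomorphisms on ℂ², ν a probability measure on G, and μ a ν-stationary Borel probability measure on ℂ². Suppose U ⊆ ℂ² is a Borel set such that for every t > 0 there is k₀ with: for every g in the support of ν*ᵏ with k ≥ k₀, g(U) ∩ B̄_t(0) = ∅, where ν*ᵏ-mass concentrates on such g (i.e., every element of supp(ν*ᵏ) has this escape property). Then μ(U) = 0. -/
open MeasureTheory Metric
open scoped ENNReal

/-- Convolution of densities on a countable group. -/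
noncomputable def conv {G : Type*} [Group G] (μ ν : G → ℝ≥0∞) : G → ℝ≥0∞ :=
  fun g => ∑' h : G, μ h * ν (h⁻¹ * g)

/-- `n`-fold convolution power `ν*ⁿ` (with `ν*¹ = ν`). -/
noncomputable def convPow {G : Type*} [Group G] [DecidableEq G]
    (ν : G → ℝ≥0∞) : ℕ → G → ℝ≥0∞
  | 0 => fun g => if g = 1 then 1 else 0
  | n + 1 => conv ν (convPow ν n)

lemma convPow_tsum_eq_one {G : Type*} [Group G] [DecidableEq G]
    (ν : G → ℝ≥0∞) (hν : ∑' g : G, ν g = 1) :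
    ∀ k, ∑' g : G, convPow ν k g = 1 := by
  intro k
  induction k with
  | zero =>
      rw [show (∑' g : G, convPow ν 0 g) = convPow ν 0 1 from
        tsum_eq_single 1 (fun g hg => by simp [convPow, hg])]
      simp [convPow]
  | succ n ih =>
      calc ∑' g : G, convPow ν (n+1) g
          = ∑' g : G, ∑' h : G, ν h * convPow ν n (h⁻¹ * g) := by
            simp [convPow, conv]
        _ = ∑' h : G, ∑' g : G, ν h * convPow ν n (h⁻¹ * g) := ENNReal.tsum_comm
        _ = ∑' h : G, ν h * ∑' g : G, convPow ν n (h⁻¹ * g) := by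
            simp [ENNReal.tsum_mul_left]
        _ = ∑' h : G, ν h * ∑' g : G, convPow ν n g := by
            congr 1; ext h; congr 1
            exact ((Equiv.mulLeft h).tsum_eq (fun g => convPow ν n (h⁻¹ * g))).symm.trans
              (by simp)
        _ = 1 := by rw [ih]; simpa using hν

lemma stationary_iter
    {G : Type*} [Group G] [Countable G] [DecidableEq G] [MulAction G (ℂ × ℂ)]
    (hcont : ∀ g : G, Continuous fun x : ℂ × ℂ => g • x)
    (ν : G → ℝ≥0∞) (μ : Measure (ℂ × ℂ))
    (hstat : ∀ A : Set (ℂ × ℂ), MeasurableSet A →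
      μ A = ∑' g : G, ν g * μ ((fun x => g • x) ⁻¹' A)) :
    ∀ k (A : Set (ℂ × ℂ)), MeasurableSet A →
      μ A = ∑' g : G, convPow ν k g * μ ((fun x => g • x) ⁻¹' A) := by
  intro k
  induction k with
  | zero =>
      intro A hA
      have h0 : (∑' g : G, convPow ν 0 g * μ ((fun x => g • x) ⁻¹' A))
          = convPow ν 0 1 * μ ((fun x => (1:G) • x) ⁻¹' A) :=
        tsum_eq_single 1 (fun g hg => by simp [convPow, hg])
      rw [h0]
      simp [convPow]
  | succ n ih =>
      intro A hA
      have key : ∀ h : G,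
          (∑' g : G, convPow ν n g * μ ((fun x => (h * g) • x) ⁻¹' A))
            = μ ((fun x => h • x) ⁻¹' A) := by
        intro h
        have hAm : MeasurableSet ((fun x => h • x) ⁻¹' A) :=
          hA.preimage (hcont h).measurable
        rw [ih _ hAm]
        congr 1; ext g; congr 2
        ext x; simp [mul_smul]
      calc μ A = ∑' h : G, ν h * μ ((fun x => h • x) ⁻¹' A) := hstat A hA
        _ = ∑' h : G, ν h *
              ∑' g : G, convPow ν n g * μ ((fun x => (h * g) • x) ⁻¹' A) := by
            congr 1; ext h; rw [key h]
        _ = ∑' h : G, ∑' g : G,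
              ν h * (convPow ν n g * μ ((fun x => (h * g) • x) ⁻¹' A)) := by
            simp [ENNReal.tsum_mul_left]
        _ = ∑' h : G, ∑' g : G,
              ν h * (convPow ν n (h⁻¹ * g) * μ ((fun x => g • x) ⁻¹' A)) := by
            refine tsum_congr fun h => ?_
            have := (Equiv.mulLeft h).tsum_eq
              (fun g => ν h * (convPow ν n (h⁻¹ * g) * μ ((fun x => g • x) ⁻¹' A)))
            simpa using this
        _ = ∑' g : G, ∑' h : G,
              ν h * (convPow ν n (h⁻¹ * g) * μ ((fun x => g • x) ⁻¹' A)) := ENNReal.tsum_comm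
        _ = ∑' g : G, convPow ν (n+1) g * μ ((fun x => g • x) ⁻¹' A) := by
            refine tsum_congr fun g => ?_
            simp only [convPow, conv]
            rw [← ENNReal.tsum_mul_right]
            simp [mul_assoc]

/-- If `μ` is a `ν`-stationary Borel probability measure on `ℂ²`, and `U` is a Borel
set such that for every `t > 0`, for all sufficiently large `k`, every `g` in the
support of the `k`-fold convolution `ν*ᵏ` moves `U` entirely outside the closed ball
of radius `t`, then `μ(U) = 0`. -/
theorem stationary_measure_escaping_set_null
    {G : Type*} [Group G] [Countable G] [DecidableEq G] [MulAction G (ℂ × ℂ)]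
    (hcont : ∀ g : G, Continuous fun x : ℂ × ℂ => g • x)
    (ν : G → ℝ≥0∞) (hν : ∑' g : G, ν g = 1)
    (μ : Measure (ℂ × ℂ)) [IsProbabilityMeasure μ]
    (hstat : ∀ A : Set (ℂ × ℂ), MeasurableSet A →
      μ A = ∑' g : G, ν g * μ ((fun x => g • x) ⁻¹' A))
    (U : Set (ℂ × ℂ)) (hU : MeasurableSet U)
    (hesc : ∀ t > (0 : ℝ), ∃ k₀ : ℕ, ∀ k ≥ k₀, ∀ g : G, convPow ν k g ≠ 0 →
      ((fun x => g • x) '' U) ∩ closedBall (0 : ℂ × ℂ) t = ∅) :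
    μ U = 0 := by
  -- Step 1: for every n, μ U ≤ μ ((closedBall 0 (n+1))ᶜ)
  have main : ∀ n : ℕ, μ U ≤ μ ((closedBall (0 : ℂ × ℂ) (n+1 : ℝ))ᶜ) := by
    intro n
    set B : Set (ℂ × ℂ) := closedBall (0 : ℂ × ℂ) (n+1 : ℝ) with hB
    have hBm : MeasurableSet B := measurableSet_closedBall
    obtain ⟨k₀, hk₀⟩ := hesc (n+1 : ℝ) (by positivity)
    have hμB : μ B = ∑' g : G, convPow ν k₀ g * μ ((fun x => g • x) ⁻¹' B) :=
      stationary_iter hcont ν μ hstat k₀ B hBm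
    have hterm : ∀ g : G,
        convPow ν k₀ g * μ ((fun x => g • x) ⁻¹' B) ≤ convPow ν k₀ g * μ Uᶜ := by
      intro g
      by_cases hg : convPow ν k₀ g = 0
      · simp [hg]
      · refine mul_le_mul_right (measure_mono ?_) _
        intro x hx
        intro hxU
        have hempty := hk₀ k₀ le_rfl g hg
        have : g • x ∈ ((fun x => g • x) '' U) ∩ B := ⟨⟨x, hxU, rfl⟩, hx⟩
        rw [hempty] at this
        exact this
    have hμB_le : μ B ≤ μ Uᶜ := by
      calc μ B = ∑' g : G, convPow ν k₀ g * μ ((fun x => g • x) ⁻¹' B) := hμB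
        _ ≤ ∑' g : G, convPow ν k₀ g * μ Uᶜ := ENNReal.tsum_le_tsum hterm
        _ = (∑' g : G, convPow ν k₀ g) * μ Uᶜ := ENNReal.tsum_mul_right
        _ = μ Uᶜ := by rw [convPow_tsum_eq_one ν hν k₀, one_mul]
    -- from μ B ≤ μ Uᶜ = 1 - μ U deduce μ U ≤ 1 - μ B = μ Bᶜ
    have h1 : μ U + μ B ≤ 1 := by
      calc μ U + μ B ≤ μ U + μ Uᶜ := add_le_add le_rfl hμB_le
        _ = 1 := by
          rw [← measure_union (disjoint_compl_right) hU.compl, Set.union_compl_self,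
            measure_univ]
    have h2 : μ Bᶜ = 1 - μ B := prob_compl_eq_one_sub hBm
    rw [h2]
    exact ENNReal.le_sub_of_add_le_right (measure_ne_top μ B) h1
  -- Step 2: the complements of the balls shrink to ∅
  have hinter : ⋂ n : ℕ, (closedBall (0 : ℂ × ℂ) (n+1 : ℝ))ᶜ = ∅ := by
    ext x
    simp only [Set.mem_iInter, Set.mem_compl_iff, mem_closedBall, not_le,
      Set.mem_empty_iff_false, iff_false, not_forall, not_lt]
    obtain ⟨n, hn⟩ := exists_nat_ge (dist x (0 : ℂ × ℂ))
    exact ⟨n, hn.trans (by linarith)⟩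
  have hanti : Antitone (fun n : ℕ => (closedBall (0 : ℂ × ℂ) (n+1 : ℝ))ᶜ) := by
    intro m n hmn
    apply Set.compl_subset_compl.2
    apply closedBall_subset_closedBall
    have : (m:ℝ) ≤ n := Nat.cast_le.2 hmn
    linarith
  have htend : Filter.Tendsto (fun n : ℕ => μ ((closedBall (0 : ℂ × ℂ) (n+1 : ℝ))ᶜ))
      Filter.atTop (nhds (μ (⋂ n : ℕ, (closedBall (0 : ℂ × ℂ) (n+1 : ℝ))ᶜ))) := by
    refine tendsto_measure_iInter_atTop (fun n => (measurableSet_closedBall.compl).nullMeasurableSet)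
      hanti ⟨0, measure_ne_top μ _⟩
  rw [hinter] at htend
  simp only [measure_empty] at htend
  have : μ U ≤ 0 := ge_of_tendsto htend (Filter.Eventually.of_forall main)
  exact le_antisymm this zero_le
end
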